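/- Every weakly type contraction is a Meir-Keeler contraction: if T satisfies ψ(d(Tx,Ty)) ≤ α(d(x,y)) − β(d(x,y)) for all x,y, with ψ nondecreasing, α continuous, β lower semicontinuous, and ψ(t) − α(t) + β(t) > 0 for all t > 0, then for every ε > 0 there exists δ > 0 such that ε ≤ d(x,y) < ε + δ implies d(Tx,Ty) < ε. -/

import Mathlib

open Filter Topology

def IsSimulation (ζ : ℝ → ℝ → ℝ) : Prop :=
  ζ 0 0 = 0 ∧
  (∀ t s : ℝ, 0 < t → 0 < s → ζ t s < s - t) ∧
  (∀ (t s : ℕ → ℝ) (L : ℝ), 0 < L → (∀ n, 0 < t n) → (∀ n, 0 < s n) →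
    Tendsto t atTop (𝓝 L) → Tendsto s atTop (𝓝 L) →
    Filter.limsup (fun n => ζ (t n) (s n)) atTop < 0)

def IsMeirKeeler {X : Type*} [MetricSpace X] (T : X → X) : Prop :=
  ∀ ε > 0, ∃ δ > 0, ∀ x y : X, ε ≤ dist x y → dist x y < ε + δ → dist (T x) (T y) < ε

def IsZContraction {X : Type*} [MetricSpace X] (T : X → X) (ζ : ℝ → ℝ → ℝ) : Prop :=
  IsSimulation ζ ∧ ∀ x y : X, 0 ≤ ζ (dist (T x) (T y)) (dist x y)

theorem weakly_type_is_meir_keeler {X : Type*} [MetricSpace X] (T : X → X)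
    (ψ α β : ℝ → ℝ)
    (hψ0 : ∀ t, 0 ≤ t → 0 ≤ ψ t) (hα0 : ∀ t, 0 ≤ t → 0 ≤ α t) (hβ0 : ∀ t, 0 ≤ t → 0 ≤ β t)
    (hψmono : MonotoneOn ψ (Set.Ici 0))
    (hα : ContinuousOn α (Set.Ici 0))
    (hβ : LowerSemicontinuousOn β (Set.Ici 0))
    (hpos : ∀ t : ℝ, 0 < t → α t - β t < ψ t)
    (hT : ∀ x y : X, ψ (dist (T x) (T y)) ≤ α (dist x y) - β (dist x y)) :
    IsMeirKeeler T := by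
  intro ε hε
  by_contra hcon
  push_neg at hcon
  choose x y h1 h2 h3 using fun n : ℕ => hcon (1 / (n + 1)) (by positivity)
  set dn : ℕ → ℝ := fun n => dist (x n) (y n) with hdn
  have hεmem : ε ∈ Set.Ici (0:ℝ) := le_of_lt hε
  have hub : Tendsto (fun n : ℕ => ε + 1 / (n + 1)) atTop (𝓝 ε) := by
    have : Tendsto (fun n : ℕ => 1 / ((n : ℝ) + 1)) atTop (𝓝 0) := tendsto_one_div_add_atTop_nhds_zero_nat
    simpa using tendsto_const_nhds.add this
  have hdtend : Tendsto dn atTop (𝓝 ε) :=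
    tendsto_of_tendsto_of_tendsto_of_le_of_le tendsto_const_nhds hub
      (fun n => h1 n) (fun n => (h2 n).le)
  have hdtend' : Tendsto dn atTop (𝓝[Set.Ici 0] ε) :=
    tendsto_nhdsWithin_of_tendsto_nhds_of_eventually_within _ hdtend
      (Eventually.of_forall fun n => dist_nonneg)
  have key : ∀ n, ψ ε ≤ α (dn n) - β (dn n) := fun n =>
    le_trans (hψmono hεmem (Set.mem_Ici.mpr dist_nonneg) (h3 n)) (hT (x n) (y n))
  have hαtend : Tendsto (fun n => α (dn n)) atTop (𝓝 (α ε)) :=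
    ((hα ε hεmem).tendsto).comp hdtend'
  -- show β ε ≤ α ε - ψ ε
  have hβle : β ε ≤ α ε - ψ ε := by
    by_contra hc
    push_neg at hc
    set c := α ε - ψ ε with hcdef
    set c' := (c + β ε) / 2 with hc'def
    have hc1 : c < c' := by rw [hc'def]; linarith
    have hc2 : c' < β ε := by rw [hc'def]; linarith
    have ev1 : ∀ᶠ n in atTop, c' < β (dn n) :=
      hdtend'.eventually (hβ ε hεmem c' hc2)
    have ev2 : ∀ᶠ n in atTop, c' ≤ α (dn n) - ψ ε := by
      filter_upwards [ev1] with n hn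
      have := key n
      linarith
    have htend2 : Tendsto (fun n => α (dn n) - ψ ε) atTop (𝓝 c) := by
      simpa [hcdef] using hαtend.sub (tendsto_const_nhds : Tendsto (fun _ : ℕ => ψ ε) atTop (𝓝 (ψ ε)))
    have : c' ≤ c := ge_of_tendsto htend2 ev2
    linarith
  have := hpos ε hε
  linarith
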